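/- Let (X, d, μ) be a metric measure space and let {Δ_k}_{k∈ℤ} be a cubical patchwork with constants σ = 1/2, a₀ > 0, η > 0: in particular, for each cube Q ∈ Δ_k and each 0 < t ≤ 1, the boundary region ∂_t Q satisfies μ(∂_t Q) ≤ a₀ t^η μ(Q). Fix Q₀ ∈ Δ₀ and τ ∈ (0,1], and let s ≥ 1. Define K₀ = Q₀ and K_{k+1} = K_k \ ⋃_{Q ∈ Δ_k(Q₀)} ∂_{τ 2^{-k/(2s)}} Q, where Δ_k(Q₀) is the set of cubes of Δ_k contained in Q₀, and K = ⋂_k K_k. Then μ(Q₀) − μ(K) ≤ a₀ τ^η (1 − 2^{−η/(2s)})⁻¹ μ(Q₀). In particular, for τ sufficiently small, μ(K) > 0. -/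

import Mathlib

open MeasureTheory

/-- The boundary region `∂_t Q` of a cube `Q` at scale `2^{-k}`:
points of `Q` within `t·2^{-k}` of the complement, together with points of the
complement within `t·2^{-k}` of `Q`. -/
def boundaryRegion {X : Type*} [MetricSpace X] (k : ℕ) (t : ℝ) (Q : Set X) : Set X :=
  {x ∈ Q | Metric.infDist x Qᶜ < t * 2 ^ (-(k : ℝ))} ∪
  {x ∈ Qᶜ | Metric.infDist x Q < t * 2 ^ (-(k : ℝ))}

/-- for the Cantor set `K = ⋂ K_k` constructed from a cubical patchwork by
removing boundary regions `∂_{τ2^{-k/(2s)}}Q` at each stage,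
`μ(Q₀) − μ(K) ≤ a₀ τ^η (1 − 2^{−η/(2s)})⁻¹ μ(Q₀)`; in particular if this bound is
less than `μ(Q₀)` (e.g. for `τ` sufficiently small), then `μ(K) > 0`. -/
theorem cantor_set_positive_measure {X : Type*} [MetricSpace X] [MeasurableSpace X]
    (μ : Measure X) (Δ : ℕ → Set (Set X)) (Q₀ : Set X)
    (a₀ : ENNReal) (η s τ : ℝ)
    (ha₀ : 0 < a₀) (hη : 0 < η) (hs : 1 ≤ s) (hτ : 0 < τ) (hτ1 : τ ≤ 1)
    (hcount : ∀ k, (Δ k).Countable)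
    (hmeas : ∀ k, ∀ Q ∈ Δ k, MeasurableSet Q)
    (hpart : ∀ k, ⋃₀ Δ k = Q₀)
    (hdisj : ∀ k, (Δ k).PairwiseDisjoint id)
    (hQ₀fin : μ Q₀ < ⊤) (hQ₀pos : 0 < μ Q₀)
    (hbd : ∀ k, ∀ Q ∈ Δ k, ∀ t : ℝ, 0 < t → t ≤ 1 →
      μ (boundaryRegion k t Q) ≤ a₀ * ENNReal.ofReal (t ^ η) * μ Q)
    (K : ℕ → Set X) (hK0 : K 0 = Q₀)
    (hKsucc : ∀ k, K (k + 1) =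
      K k \ ⋃ Q ∈ Δ k, boundaryRegion k (τ * 2 ^ (-(k : ℝ) / (2 * s))) Q) :
    μ Q₀ - μ (⋂ k, K k) ≤
      a₀ * ENNReal.ofReal (τ ^ η) *
        (1 - ENNReal.ofReal (2 ^ (-η / (2 * s))))⁻¹ * μ Q₀ ∧
    (a₀ * ENNReal.ofReal (τ ^ η) *
        (1 - ENNReal.ofReal (2 ^ (-η / (2 * s))))⁻¹ * μ Q₀ < μ Q₀ →
      0 < μ (⋂ k, K k)) := by
  have hs0 : (0:ℝ) < 2 * s := by linarith
  set c : ℝ := (2:ℝ) ^ (-η / (2 * s)) with hc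
  have hc_pos : 0 < c := Real.rpow_pos_of_pos two_pos _
  set r : ENNReal := ENNReal.ofReal c with hr
  set A : ENNReal := ENNReal.ofReal (τ ^ η) with hA
  -- measure of each cube sums to μ Q₀
  have hsumQ : ∀ k, ∑' Q : Δ k, μ (Q : Set X) = μ Q₀ := by
    intro k
    rw [← hpart k, measure_sUnion (hcount k) (hdisj k) (hmeas k)]
  -- each step removes at most a₀ * A * r^k * μ Q₀
  have hstep : ∀ k : ℕ, μ (K k \ K (k + 1)) ≤ a₀ * A * μ Q₀ * r ^ k := by
    intro k
    set t : ℝ := τ * 2 ^ (-(k : ℝ) / (2 * s)) with ht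
    have ht_pos : 0 < t := mul_pos hτ (Real.rpow_pos_of_pos two_pos _)
    have ht_le : t ≤ 1 := by
      have h2 : (2:ℝ) ^ (-(k : ℝ) / (2 * s)) ≤ 1 :=
        Real.rpow_le_one_of_one_le_of_nonpos one_le_two
          (div_nonpos_of_nonpos_of_nonneg (neg_nonpos.2 (Nat.cast_nonneg k)) hs0.le)
      calc t ≤ 1 * 1 := mul_le_mul hτ1 h2 (Real.rpow_pos_of_pos two_pos _).le one_pos.le
      _ = 1 := by ring
    have hteta : ENNReal.ofReal (t ^ η) = A * r ^ k := by
      have h1 : t ^ η = τ ^ η * c ^ k := by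
        rw [ht, Real.mul_rpow hτ.le (Real.rpow_pos_of_pos two_pos _).le]
        congr 1
        rw [hc, ← Real.rpow_natCast ((2:ℝ) ^ (-η / (2 * s))) k,
          ← Real.rpow_mul (by norm_num), ← Real.rpow_mul (by norm_num)]
        congr 1
        field_simp
      rw [h1, ENNReal.ofReal_mul (Real.rpow_nonneg hτ.le _),
        ENNReal.ofReal_pow hc_pos.le]
    have hsub : K k \ K (k + 1) ⊆
        ⋃ Q ∈ Δ k, boundaryRegion k t Q := by
      rw [hKsucc k]
      intro x hx
      simp only [Set.mem_diff, not_and, not_not] at hx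
      exact hx.2 hx.1
    calc μ (K k \ K (k + 1)) ≤ μ (⋃ Q ∈ Δ k, boundaryRegion k t Q) := measure_mono hsub
      _ ≤ ∑' Q : Δ k, μ (boundaryRegion k t Q) := measure_biUnion_le μ (hcount k) _
      _ ≤ ∑' Q : Δ k, a₀ * ENNReal.ofReal (t ^ η) * μ (Q : Set X) :=
          ENNReal.tsum_le_tsum fun Q => hbd k Q Q.2 t ht_pos ht_le
      _ = a₀ * ENNReal.ofReal (t ^ η) * μ Q₀ := by
          rw [ENNReal.tsum_mul_left, hsumQ k]
      _ = a₀ * A * μ Q₀ * r ^ k := by rw [hteta]; ring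
  -- the complement of the intersection is covered by the step differences
  have hcover : Q₀ \ (⋂ k, K k) ⊆ ⋃ k, K k \ K (k + 1) := by
    intro x hx
    rw [Set.mem_diff, Set.mem_iInter] at hx
    push_neg at hx
    obtain ⟨hx0, n, hn⟩ := hx
    by_contra hmem
    simp only [Set.mem_iUnion, Set.mem_diff, not_exists, not_and, not_not] at hmem
    have : ∀ m, x ∈ K m := by
      intro m
      induction m with
      | zero => rwa [hK0]
      | succ m ih => exact hmem m ih
    exact hn (this n)
  -- main estimate
  have hmain : μ Q₀ - μ (⋂ k, K k) ≤ a₀ * A * (1 - r)⁻¹ * μ Q₀ := by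
    rw [tsub_le_iff_right]
    calc μ Q₀ ≤ μ (Q₀ ∩ ⋂ k, K k) + μ (Q₀ \ ⋂ k, K k) := measure_le_inter_add_diff μ _ _
      _ ≤ μ (⋂ k, K k) + μ (Q₀ \ ⋂ k, K k) :=
          add_le_add_left (measure_mono Set.inter_subset_right) _
      _ ≤ μ (⋂ k, K k) + ∑' k, μ (K k \ K (k + 1)) := by
          gcongr
          exact (measure_mono hcover).trans (measure_iUnion_le _)
      _ ≤ μ (⋂ k, K k) + ∑' k, a₀ * A * μ Q₀ * r ^ k := by
          gcongr with k; exact hstep k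
      _ = μ (⋂ k, K k) + a₀ * A * μ Q₀ * (1 - r)⁻¹ := by
          rw [ENNReal.tsum_mul_left, ENNReal.tsum_geometric]
      _ = a₀ * A * (1 - r)⁻¹ * μ Q₀ + μ (⋂ k, K k) := by ring
  refine ⟨hmain, fun hlt => ?_⟩
  rcases eq_or_ne (μ (⋂ k, K k)) 0 with h0 | h0
  · rw [h0, tsub_zero] at hmain
    exact absurd (lt_of_le_of_lt hmain hlt) (lt_irrefl _)
  · exact pos_iff_ne_zero.2 h0
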